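/- If x = x_1⋯x_n is a revised ascent sequence of length n ≥ 1, then x_1 = max(x). -/

import Mathlib

/-- An endofunction of size `n`: values in `{1,…,n}` (indices are `Fin n`, 0-based). -/
def IsEndo (n : ℕ) (x : Fin n → ℕ) : Prop := ∀ i, 1 ≤ x i ∧ x i ≤ n

/-- The maximum value of `x`. -/
def maxVal (n : ℕ) (x : Fin n → ℕ) : ℕ := Finset.univ.sup x

/-- A Cayley permutation: an endofunction whose image is `{1,…,max x}`. -/
def IsCayley (n : ℕ) (x : Fin n → ℕ) : Prop :=
  IsEndo n x ∧ ∀ v, 1 ≤ v → v ≤ maxVal n x → ∃ i, x i = v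

/-- Ascent bottoms (0-based; index 0 always included). -/
def Ascbot (n : ℕ) (x : Fin n → ℕ) : Set (Fin n) :=
  {i | i.1 = 0 ∨ ∃ h : i.1 + 1 < n, x i < x ⟨i.1 + 1, h⟩}

/-- Indices of leftmost occurrences of values. -/
def Nub (n : ℕ) (x : Fin n → ℕ) : Set (Fin n) :=
  {i | ∀ j, j < i → x j ≠ x i}

/-- A revised ascent sequence. -/
def IsRAS (n : ℕ) (x : Fin n → ℕ) : Prop :=
  IsCayley n x ∧ Ascbot n x = Nub n x

theorem stmt1 (n : ℕ) (hn : 1 ≤ n) (x : Fin n → ℕ) (hx : IsRAS n x) :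
    x ⟨0, hn⟩ = maxVal n x := by
  classical
  have hne : (Finset.univ : Finset (Fin n)).Nonempty := ⟨⟨0, hn⟩, Finset.mem_univ _⟩
  obtain ⟨j, -, hj⟩ := Finset.exists_mem_eq_sup Finset.univ hne x
  set S := Finset.univ.filter (fun i => x i = maxVal n x) with hS
  have hSne : S.Nonempty := ⟨j, by rw [hS, Finset.mem_filter]; exact ⟨Finset.mem_univ _, hj.symm⟩⟩
  set i := S.min' hSne with hidef
  have hi : x i = maxVal n x := (Finset.mem_filter.mp (S.min'_mem hSne)).2
  have hnub : i ∈ Nub n x := by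
    intro k hk hkx
    have hkS : k ∈ S := Finset.mem_filter.mpr ⟨Finset.mem_univ _, hkx.trans hi⟩
    exact absurd (S.min'_le k hkS) (not_le.mpr hk)
  have hasc : i ∈ Ascbot n x := hx.2 ▸ hnub
  rcases hasc with h0 | ⟨h, hlt⟩
  · have : (⟨0, hn⟩ : Fin n) = i := Fin.ext h0.symm
    rw [this, hi]
  · have hle : x ⟨i.1 + 1, h⟩ ≤ maxVal n x := Finset.le_sup (Finset.mem_univ _)
    omega
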